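/- Error Propagated Through Squared ℓ2-Norm Pooling (Lemma C.5): Let N, C be positive integers with C dividing N, and for a vector φ ∈ ℝ^N define pool_C(φ) ∈ ℝ^C by pool_C(φ)_j := Σ_{l=(j−1)N/C+1}^{jN/C} φ_l² for j = 1,…,C (the sum of squares over the j-th consecutive block of N/C entries). Let φ, φ̃ ∈ ℝ^N with ‖φ‖₂ ≤ 1, ‖φ̃‖₂ ≤ 1, and ‖φ − φ̃‖₂ ≤ ε. Then ‖pool_C(φ) − pool_C(φ̃)‖₂ ≤ 2Nε/√C. -/

import Mathlib

open scoped RealInnerProductSpace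


noncomputable section

/-- Squared `ℓ₂`-norm pooling: the `j`-th output entry is the sum of the squares of the
entries in the `j`-th consecutive block of `N/C` coordinates. -/
def poolC (N C : ℕ) (φ : EuclideanSpace ℝ (Fin N)) : EuclideanSpace ℝ (Fin C) :=
  WithLp.toLp 2 (fun j => ∑ l : Fin N, if (l : ℕ) / (N / C) = (j : ℕ) then (φ l) ^ 2 else 0)

lemma abs_sum_mul_le_norm_mul_norm (N : ℕ) (a b : EuclideanSpace ℝ (Fin N)) :
    ∑ l : Fin N, |a l| * |b l| ≤ ‖a‖ * ‖b‖ := by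
  set x : EuclideanSpace ℝ (Fin N) := WithLp.toLp 2 (fun l => |a l|) with hx
  set y : EuclideanSpace ℝ (Fin N) := WithLp.toLp 2 (fun l => |b l|) with hy
  have h1 : ∑ l : Fin N, |a l| * |b l| = (inner ℝ x y : ℝ) := by
    rw [PiLp.inner_apply]
    simp [hx, hy, RCLike.inner_apply, mul_comm]
  have hxn : ‖x‖ = ‖a‖ := by
    rw [EuclideanSpace.norm_eq, EuclideanSpace.norm_eq]
    simp [hx]
  have hyn : ‖y‖ = ‖b‖ := by
    rw [EuclideanSpace.norm_eq, EuclideanSpace.norm_eq]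
    simp [hy]
  calc ∑ l : Fin N, |a l| * |b l| = (inner ℝ x y : ℝ) := h1
    _ ≤ ‖x‖ * ‖y‖ := real_inner_le_norm x y
    _ = ‖a‖ * ‖b‖ := by rw [hxn, hyn]

/-- **Error propagated through squared ℓ₂-norm pooling** (Lemma C.5).
If `‖φ‖₂ ≤ 1`, `‖φ̃‖₂ ≤ 1` and `‖φ - φ̃‖₂ ≤ ε`, then
`‖pool_C(φ) - pool_C(φ̃)‖₂ ≤ 2Nε/√C`. -/
theorem error_propagated_through_pooling
    (N C : ℕ) (hN : 0 < N) (hC : 0 < C) (hdvd : C ∣ N)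
    (φ φt : EuclideanSpace ℝ (Fin N))
    (hφ : ‖φ‖ ≤ 1) (hφt : ‖φt‖ ≤ 1)
    (ε : ℝ) (hε : ‖φ - φt‖ ≤ ε) :
    ‖poolC N C φ - poolC N C φt‖ ≤ 2 * N * ε / Real.sqrt C := by
  have hε0 : 0 ≤ ε := le_trans (norm_nonneg _) hε
  -- pointwise bound
  have key : ∀ j : Fin C, |(poolC N C φ - poolC N C φt) j| ≤ 2 * ε := by
    intro j
    have happ : (poolC N C φ - poolC N C φt) j
        = ∑ l : Fin N, ((if (l : ℕ) / (N / C) = (j : ℕ) then (φ l) ^ 2 else 0)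
          - (if (l : ℕ) / (N / C) = (j : ℕ) then (φt l) ^ 2 else 0)) := by
      simp [poolC, Finset.sum_sub_distrib]
    rw [happ]
    calc |∑ l : Fin N, ((if (l : ℕ) / (N / C) = (j : ℕ) then (φ l) ^ 2 else 0)
          - (if (l : ℕ) / (N / C) = (j : ℕ) then (φt l) ^ 2 else 0))|
        ≤ ∑ l : Fin N, |((if (l : ℕ) / (N / C) = (j : ℕ) then (φ l) ^ 2 else 0)
          - (if (l : ℕ) / (N / C) = (j : ℕ) then (φt l) ^ 2 else 0))| :=
          Finset.abs_sum_le_sum_abs _ _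
      _ ≤ ∑ l : Fin N, |(φ - φt) l| * |(φ + φt) l| := by
          apply Finset.sum_le_sum
          intro l _
          by_cases h : (l : ℕ) / (N / C) = (j : ℕ)
          · simp only [h, if_true]
            have : (φ l) ^ 2 - (φt l) ^ 2 = ((φ - φt) l) * ((φ + φt) l) := by
              simp [sq]; ring
            rw [this, abs_mul]
          · simp [h, abs_nonneg, mul_nonneg]
      _ ≤ ‖φ - φt‖ * ‖φ + φt‖ := abs_sum_mul_le_norm_mul_norm N _ _
      _ ≤ ε * 2 := by
          apply mul_le_mul hε ?_ (norm_nonneg _) hε0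
          calc ‖φ + φt‖ ≤ ‖φ‖ + ‖φt‖ := norm_add_le _ _
            _ ≤ 2 := by linarith
      _ = 2 * ε := mul_comm _ _
  -- norm bound
  have h2 : ‖poolC N C φ - poolC N C φt‖ ≤ Real.sqrt C * (2 * ε) := by
    rw [EuclideanSpace.norm_eq]
    have : ∑ j : Fin C, ‖(poolC N C φ - poolC N C φt) j‖ ^ 2 ≤ C * (2 * ε) ^ 2 := by
      calc ∑ j : Fin C, ‖(poolC N C φ - poolC N C φt) j‖ ^ 2
          ≤ ∑ _j : Fin C, (2 * ε) ^ 2 := by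
            apply Finset.sum_le_sum
            intro j _
            have := key j
            have h0 : ‖(poolC N C φ - poolC N C φt) j‖ = |(poolC N C φ - poolC N C φt) j| :=
              Real.norm_eq_abs _
            rw [h0]
            nlinarith [abs_nonneg ((poolC N C φ - poolC N C φt) j)]
        _ = C * (2 * ε) ^ 2 := by simp [Finset.sum_const]
    calc Real.sqrt (∑ j : Fin C, ‖(poolC N C φ - poolC N C φt) j‖ ^ 2)
        ≤ Real.sqrt (C * (2 * ε) ^ 2) := Real.sqrt_le_sqrt this
      _ = Real.sqrt C * (2 * ε) := by
          rw [Real.sqrt_mul (Nat.cast_nonneg C)]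
          congr 1
          exact Real.sqrt_sq (by positivity)
  refine le_trans h2 ?_
  have hCpos : (0:ℝ) < Real.sqrt C := Real.sqrt_pos.mpr (by exact_mod_cast hC)
  rw [le_div_iff₀ hCpos]
  have hsq : Real.sqrt C * Real.sqrt C = (C : ℝ) := Real.mul_self_sqrt (Nat.cast_nonneg C)
  have hCN : (C : ℝ) ≤ N := by exact_mod_cast Nat.le_of_dvd hN hdvd
  calc Real.sqrt C * (2 * ε) * Real.sqrt C = (C : ℝ) * (2 * ε) := by
        rw [mul_comm _ (Real.sqrt C), ← mul_assoc, hsq]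
    _ ≤ (N : ℝ) * (2 * ε) := by nlinarith
    _ = 2 * N * ε := by ring
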